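/- Let α be the all-ones composition with r ≥ 1 parts, and let k > r. Then a word w over the alphabet {L, R, U_1, …, U_k} is admissible for α (with respect to the poset 𝔑) with w.α of width k if and only if w = u s w′, where u is a (possibly empty) word over {U_1, …, U_k}, s ∈ {L, R}, w′ is admissible for α with w′.α of width k−1, and it is not the case that s = R and w′ = L^{k−1−r} (the word consisting of k−1−r letters L). -/

import Mathlib

/-- A composition: a finite list of positive integers. -/
def IsComposition (P : List ℕ) : Prop := ∀ x ∈ P, 0 < x

/-- The alphabet `{L, R, U_1, U_2, …}` acting on compositions. -/
inductive Letter where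
  | L : Letter
  | R : Letter
  | U : ℕ → Letter
deriving DecidableEq

/-- The partial action of a letter: `L` prepends a part 1, `R` appends a part 1,
and `U j` increases the `j`-th part by 1 (defined when `1 ≤ j ≤` width). -/
def act : Letter → List ℕ → Option (List ℕ)
  | .L, P => some (1 :: P)
  | .R, P => some (P ++ [1])
  | .U j, P =>
    if 1 ≤ j ∧ j ≤ P.length then some (P.set (j - 1) (P.getD (j - 1) 0 + 1)) else none

/-- The partial action of a word `w = w_m ⋯ w_1` (a list whose head is `w_m`):
the rightmost letter `w_1` acts first. -/
def actWord : List Letter → List ℕ → Option (List ℕ)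
  | [], P => some P
  | t :: w, P => (actWord w P).bind (act t)

/-- A word is admissible for a composition (with respect to the poset 𝔑) if at
every step the action is defined, and the letter `R` is never applied to an
all-ones composition (since there `L` and `R` have the same effect and `L` has
higher priority). -/
def Admissible : List Letter → List ℕ → Prop
  | [], _ => True
  | t :: w, P =>
    Admissible w P ∧
      ∃ Q, actWord w P = some Q ∧ (act t Q).isSome ∧
        (t = Letter.R → ¬ ∀ a ∈ Q, a = 1)

lemma actWord_append (a b : List Letter) (P : List ℕ) :
    actWord (a ++ b) P = (actWord b P).bind (actWord a) := by
  induction a with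
  | nil => simp [actWord]
  | cons t a ih =>
    simp only [List.cons_append, actWord, ih, Option.bind_assoc, List.append_eq]

lemma adm_append_of {b : List Letter} {P Q0 : List ℕ} (hb : Admissible b P)
    (h0 : actWord b P = some Q0) :
    ∀ a : List Letter, Admissible a Q0 → Admissible (a ++ b) P := by
  intro a
  induction a with
  | nil => intro _; exact hb
  | cons t a ih =>
    rintro ⟨ha, Q, hQ, hc⟩
    refine ⟨ih ha, Q, ?_, hc⟩
    show actWord (a ++ b) P = some Q
    rw [actWord_append, h0, Option.bind_some, hQ]

lemma actWord_pos : ∀ (w : List Letter) (P Q : List ℕ), actWord w P = some Q →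
    (∀ a ∈ P, 0 < a) → ∀ a ∈ Q, 0 < a := by
  intro w
  induction w with
  | nil => intro P Q h hP; cases h; exact hP
  | cons t w ih =>
    intro P Q h hP
    simp only [actWord] at h
    obtain ⟨Q2, h2, ht⟩ := Option.bind_eq_some_iff.mp h
    have hQ2 := ih P Q2 h2 hP
    cases t with
    | L => simp only [act, Option.some_inj] at ht; subst ht
           intro a ha; rcases List.mem_cons.mp ha with h | h
           · omega
           · exact hQ2 a h
    | R => simp only [act, Option.some_inj] at ht; subst ht
           intro a ha; rcases List.mem_append.mp ha with h | h
           · exact hQ2 a h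
           · simp at h; omega
    | U j =>
      simp only [act] at ht
      split at ht
      · cases ht
        intro a ha
        rcases List.mem_or_eq_of_mem_set ha with h | h
        · exact hQ2 a h
        · omega
      · exact absurd ht (by simp)

lemma act_U_eq {j : ℕ} {P Q : List ℕ} (h : act (Letter.U j) P = some Q) :
    1 ≤ j ∧ j ≤ P.length ∧ Q = P.set (j - 1) (P.getD (j - 1) 0 + 1) := by
  simp only [act] at h
  split at h
  · rename_i hc; cases h; exact ⟨hc.1, hc.2, rfl⟩
  · exact absurd h (by simp)

lemma actWord_replicate_L (P : List ℕ) : ∀ n,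
    actWord (List.replicate n Letter.L) P = some (List.replicate n 1 ++ P) := by
  intro n
  induction n with
  | zero => simp [actWord]
  | succ n ih =>
    rw [List.replicate_succ]
    simp only [actWord, ih, Option.bind, act, List.replicate_succ, List.cons_append]

lemma eq_replicate_of_allOnes : ∀ (w : List Letter) (P Q : List ℕ),
    (∀ a ∈ P, 0 < a) → Admissible w P → actWord w P = some Q → (∀ a ∈ Q, a = 1) →
    w = List.replicate w.length Letter.L ∧ Q.length = P.length + w.length := by
  intro w
  induction w with
  | nil => intro P Q _ _ h _; cases h; simp
  | cons t w ih =>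
    intro P Q hP hA h h1
    obtain ⟨hw, Q2, h2, _, hR⟩ := hA
    simp only [actWord, h2, Option.bind] at h
    cases t with
    | L =>
      simp only [act, Option.some_inj] at h
      subst h
      have h1' : ∀ a ∈ Q2, a = 1 := fun a ha => h1 a (List.mem_cons_of_mem _ ha)
      obtain ⟨hwL, hlen⟩ := ih P Q2 hP hw h2 h1'
      constructor
      · rw [List.length_cons, List.replicate_succ]
        exact congrArg (Letter.L :: ·) hwL
      · simp [hlen]; omega
    | R =>
      simp only [act, Option.some_inj] at h
      subst h
      exact absurd (fun a ha => h1 a (List.mem_append_left _ ha)) (hR rfl)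
    | U j =>
      obtain ⟨hj1, hj2, hQ⟩ := act_U_eq h
      exfalso
      have hpos := actWord_pos w P Q2 h2 hP
      have hjl : j - 1 < Q2.length := by omega
      have hget : Q2.getD (j-1) 0 = Q2[j-1] := List.getD_eq_getElem Q2 0 hjl
      have hmem : Q2[j-1] ∈ Q2 := List.getElem_mem hjl
      have h2pos : 0 < Q2[j-1] := hpos _ hmem
      have hjl' : j - 1 < (Q2.set (j - 1) (Q2.getD (j - 1) 0 + 1)).length := by
        simpa using hjl
      subst hQ
      have h2' := h1 _ (List.getElem_mem hjl')
      rw [List.getElem_set_self] at h2'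
      omega

lemma u_run (k : ℕ) : ∀ (u : List Letter),
    (∀ t ∈ u, ∃ m, 1 ≤ m ∧ m ≤ k ∧ t = Letter.U m) →
    ∀ Q : List ℕ, Q.length = k →
    Admissible u Q ∧ ∃ Q', actWord u Q = some Q' ∧ Q'.length = k := by
  intro u
  induction u with
  | nil => intro _ Q hQ; exact ⟨trivial, Q, rfl, hQ⟩
  | cons t u ih =>
    intro hu Q hQ
    obtain ⟨hA, Q', hQ', hlen⟩ := ih (fun t ht => hu t (List.mem_cons_of_mem _ ht)) Q hQ
    obtain ⟨m, hm1, hm2, hm3⟩ := hu t List.mem_cons_self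
    subst hm3
    have hdef : act (Letter.U m) Q' = some (Q'.set (m-1) (Q'.getD (m-1) 0 + 1)) := by
      simp only [act, if_pos (⟨hm1, by omega⟩ : 1 ≤ m ∧ m ≤ Q'.length)]
    refine ⟨⟨hA, Q', hQ', by simp [hdef], by simp⟩,
      Q'.set (m - 1) (Q'.getD (m - 1) 0 + 1), ?_, by simp [hlen]⟩
    show (actWord u Q).bind (act (Letter.U m)) = _
    rw [hQ', Option.bind_some, hdef]

lemma fwd (r k : ℕ) (hr : 1 ≤ r) (hk : r < k) : ∀ w : List Letter,
    (∀ t ∈ w, t = Letter.L ∨ t = Letter.R ∨ ∃ j, 1 ≤ j ∧ j ≤ k ∧ t = Letter.U j) →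
    Admissible w (List.replicate r 1) →
    ∀ Q, actWord w (List.replicate r 1) = some Q → Q.length = k →
    ∃ u : List Letter, ∃ s : Letter, ∃ w' : List Letter,
      (∀ t ∈ u, ∃ m, 1 ≤ m ∧ m ≤ k ∧ t = Letter.U m) ∧
      (s = Letter.L ∨ s = Letter.R) ∧
      Admissible w' (List.replicate r 1) ∧
      (∃ Q', actWord w' (List.replicate r 1) = some Q' ∧ Q'.length = k - 1) ∧
      ¬(s = Letter.R ∧ w' = List.replicate (k - 1 - r) Letter.L) ∧
      w = u ++ s :: w' := by
  intro w
  induction w with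
  | nil =>
    intro _ _ Q h hlen
    cases h
    simp at hlen
    omega
  | cons t w ih =>
    intro halpha hA Q h hlen
    obtain ⟨hw, Q2, h2, _, hR⟩ := hA
    simp only [actWord, h2, Option.bind] at h
    cases t with
    | L =>
      simp only [act, Option.some_inj] at h
      subst h
      refine ⟨[], Letter.L, w, by simp, Or.inl rfl, hw, ⟨Q2, h2, by simp at hlen; omega⟩,
        by simp, by simp⟩
    | R =>
      simp only [act, Option.some_inj] at h
      subst h
      refine ⟨[], Letter.R, w, by simp, Or.inr rfl, hw, ⟨Q2, h2, by simp at hlen; omega⟩,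
        ?_, by simp⟩
      rintro ⟨-, rfl⟩
      rw [actWord_replicate_L] at h2
      apply hR rfl
      rw [← Option.some_inj.mp h2]
      intro a ha
      rcases List.mem_append.mp ha with h | h <;> exact List.eq_of_mem_replicate h
    | U j =>
      obtain ⟨hj1, hj2, hQ⟩ := act_U_eq h
      have hlen2 : Q2.length = k := by rw [hQ] at hlen; simpa using hlen
      obtain ⟨u, s, w', c1, c2, c3, c4, c5, c6⟩ :=
        ih (fun t ht => halpha t (List.mem_cons_of_mem _ ht)) hw Q2 h2 hlen2
      refine ⟨Letter.U j :: u, s, w', ?_, c2, c3, c4, c5, by rw [c6]; rfl⟩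
      intro t ht
      rcases List.mem_cons.mp ht with h | h
      · subst h
        rcases halpha (Letter.U j) List.mem_cons_self with h | h | ⟨m, hm1, hm2, hm3⟩
        · exact absurd h (by simp)
        · exact absurd h (by simp)
        · exact ⟨m, hm1, hm2, hm3⟩
      · exact c1 t h

theorem stmt16 (r : ℕ) (hr : 1 ≤ r) (α : List ℕ) (hα : α = List.replicate r 1)
    (k : ℕ) (hk : r < k) :
    ∀ w : List Letter,
      (∀ t ∈ w, t = Letter.L ∨ t = Letter.R ∨ ∃ j, 1 ≤ j ∧ j ≤ k ∧ t = Letter.U j) →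
      ((Admissible w α ∧ ∃ Q, actWord w α = some Q ∧ Q.length = k) ↔
        ∃ u : List Letter, ∃ s : Letter, ∃ w' : List Letter,
          (∀ t ∈ u, ∃ m, 1 ≤ m ∧ m ≤ k ∧ t = Letter.U m) ∧
          (s = Letter.L ∨ s = Letter.R) ∧
          Admissible w' α ∧ (∃ Q', actWord w' α = some Q' ∧ Q'.length = k - 1) ∧
          ¬(s = Letter.R ∧ w' = List.replicate (k - 1 - r) Letter.L) ∧
          w = u ++ s :: w') := by
  subst hα
  intro w halpha
  constructor
  · rintro ⟨hA, Q, hQ, hlen⟩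
    exact fwd r k hr hk w halpha hA Q hQ hlen
  · rintro ⟨u, s, w', hu, hs, hw', ⟨Q', hQ', hlen'⟩, hnot, rfl⟩
    -- act s Q'
    obtain ⟨Q1, hQ1, hlen1⟩ : ∃ Q1, act s Q' = some Q1 ∧ Q1.length = k := by
      rcases hs with rfl | rfl
      · exact ⟨1 :: Q', rfl, by simp [hlen']; omega⟩
      · exact ⟨Q' ++ [1], rfl, by simp [hlen']; omega⟩
    have hRcond : s = Letter.R → ¬ ∀ a ∈ Q', a = 1 := by
      rintro rfl h1
      obtain ⟨hwL, hlenL⟩ := eq_replicate_of_allOnes w' _ Q'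
        (by intro a ha; have := List.eq_of_mem_replicate ha; omega) hw' hQ' h1
      apply hnot
      refine ⟨rfl, ?_⟩
      rw [hwL]
      congr 1
      simp at hlenL
      omega
    have hAsw : Admissible (s :: w') (List.replicate r 1) :=
      ⟨hw', Q', hQ', by simp [hQ1], hRcond⟩
    have hactsw : actWord (s :: w') (List.replicate r 1) = some Q1 := by
      simp only [actWord, hQ', Option.bind]; exact hQ1
    obtain ⟨hAu, Q2, hQ2, hlen2⟩ := u_run k u hu Q1 hlen1
    refine ⟨adm_append_of hAsw hactsw u hAu, Q2, ?_, hlen2⟩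
    rw [actWord_append, hactsw, Option.bind]
    exact hQ2
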